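/- Let d ∈ ℕ, t_j, t_k ∈ [0,1)^d with w_∞(t_j − t_k) > 0, let λ, β, n ∈ ℕ with β even and n ≥ 2β²λ, set N = n+1, P = ⌊n/(λβ)⌋. Then the function H_j(t) := d_P^β(t − t_j) is a trigonometric polynomial of max-degree Pβ ≤ n/λ satisfying H_j(t_j) = 1 and |H_j(t)| ≤ (λβ/(2N·w_∞(t − t_j)))^β for t ≠ t_j. -/

import Mathlib

open Real Matrix MeasureTheory

/-- Wrap-around distance on the torus. -/
noncomputable def wrap (x : ℝ) : ℝ := ⨅ r : ℤ, |x + (r : ℝ)|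

/-- Modified Dirichlet kernel. -/
noncomputable def dirich (m : ℕ) (t : ℝ) : ℂ :=
  ((m : ℂ) + 1)⁻¹ * ∑ k ∈ Finset.range (m + 1), Complex.exp (2 * Real.pi * Complex.I * k * t)

lemma wrap_eq (x : ℝ) : wrap x = |x - round x| := by
  unfold wrap
  apply le_antisymm
  · have hb : BddBelow (Set.range fun r : ℤ => |x + (r : ℝ)|) :=
      ⟨0, by rintro y ⟨r, rfl⟩; exact abs_nonneg _⟩
    have := ciInf_le hb (-round x)
    simpa [sub_eq_add_neg] using this
  · apply le_ciInf
    intro r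
    have := round_le x (-r)
    simpa [sub_eq_add_neg] using this

lemma wrap_nonneg (x : ℝ) : 0 ≤ wrap x := by rw [wrap_eq]; exact abs_nonneg _

lemma wrap_le_half (x : ℝ) : wrap x ≤ 1/2 := by rw [wrap_eq]; exact abs_sub_round x

lemma two_wrap_le_abs_sin (x : ℝ) : 2 * wrap x ≤ |Real.sin (π * x)| := by
  rw [wrap_eq]
  set u := x - round x with hu
  have h1 : |Real.sin (π * x)| = |Real.sin (π * u)| := by
    have : π * x = π * u + round x * π := by rw [hu]; ring
    rw [this, Real.sin_add, Real.sin_int_mul_pi, mul_zero, add_zero, abs_mul]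
    have hc : |Real.cos ((round x : ℝ) * π)| = 1 := by
      have h2 : Real.sin ((round x : ℝ) * π) = 0 := Real.sin_int_mul_pi _
      have := Real.sin_sq_add_cos_sq ((round x : ℝ) * π)
      rw [h2] at this
      nlinarith [abs_nonneg (Real.cos ((round x : ℝ) * π)), sq_abs (Real.cos ((round x : ℝ) * π))]
    rw [hc, mul_one]
  rw [h1]
  have hu2 : |u| ≤ 1/2 := abs_sub_round x
  have h3 : |Real.sin (π * u)| = Real.sin (π * |u|) := by
    rcases le_or_gt 0 u with h | h
    · rw [abs_of_nonneg h, abs_of_nonneg]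
      apply Real.sin_nonneg_of_nonneg_of_le_pi
      · positivity
      · nlinarith [Real.pi_pos, hu2, abs_of_nonneg h]
    · rw [abs_of_neg h, mul_neg, Real.sin_neg, abs_of_nonpos]
      apply Real.sin_nonpos_of_nonpos_of_neg_pi_le
      · nlinarith [Real.pi_pos, h]
      · nlinarith [Real.pi_pos, mul_nonneg Real.pi_pos.le (by nlinarith [abs_of_neg h, hu2] : (0:ℝ) ≤ u + 1/2)]
  rw [h3]
  have h4 := Real.mul_le_sin (x := π * |u|) (by positivity) (by nlinarith [Real.pi_pos, hu2])
  have h5 : 2 / π * (π * |u|) = 2 * |u| := by field_simp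
  linarith

lemma abs_exp_two_pi_sub_one (x : ℝ) :
    ‖Complex.exp (2 * π * Complex.I * x) - 1‖ = 2 * |Real.sin (π * x)| := by
  have h : (2 : ℂ) * π * Complex.I * x = ((2 * π * x : ℝ) : ℂ) * Complex.I := by
    push_cast; ring
  rw [h, Complex.exp_mul_I]
  have h2 : (Complex.cos ((2*π*x : ℝ) : ℂ) + Complex.sin ((2*π*x : ℝ) : ℂ) * Complex.I : ℂ) - 1
      = ((Real.cos (2*π*x) - 1 : ℝ) : ℂ) + ((Real.sin (2*π*x) : ℝ) : ℂ) * Complex.I := by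
    rw [← Complex.ofReal_cos, ← Complex.ofReal_sin]; push_cast; ring
  rw [h2, Complex.norm_add_mul_I]
  have key : (Real.cos (2*π*x) - 1) ^ 2 + Real.sin (2*π*x) ^ 2 = (2 * |Real.sin (π * x)|) ^ 2 := by
    have hc : Real.cos (2*π*x) = 1 - 2 * Real.sin (π * x) ^ 2 := by
      have h6 : 2*π*x = 2*(π*x) := by ring
      rw [h6, Real.cos_two_mul]
      nlinarith [Real.sin_sq_add_cos_sq (π*x)]
    nlinarith [Real.sin_sq_add_cos_sq (2*π*x), sq_abs (Real.sin (π*x)), hc]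
  rw [key, Real.sqrt_sq (by positivity)]



lemma dirich_zero (m : ℕ) : dirich m 0 = 1 := by
  unfold dirich
  simp [Complex.exp_zero]
  rw [inv_mul_cancel₀]
  exact Nat.cast_add_one_ne_zero m

lemma abs_dirich_le_one (m : ℕ) (t : ℝ) : ‖dirich m t‖ ≤ 1 := by
  unfold dirich
  rw [norm_mul]
  have h1 : ∀ k : ℕ, ‖Complex.exp (2 * Real.pi * Complex.I * k * t)‖ = 1 := by
    intro k
    have : (2 : ℂ) * Real.pi * Complex.I * k * t = ((2 * Real.pi * k * t : ℝ) : ℂ) * Complex.I := by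
      push_cast; ring
    rw [this, ← Complex.norm_exp_ofReal_mul_I (2 * Real.pi * k * t)]
  calc ‖((m:ℂ)+1)⁻¹‖ * ‖∑ k ∈ Finset.range (m+1), Complex.exp (2 * Real.pi * Complex.I * k * t)‖
      ≤ ‖((m:ℂ)+1)⁻¹‖ * ∑ k ∈ Finset.range (m+1), ‖Complex.exp (2 * Real.pi * Complex.I * k * t)‖ := by
        gcongr
        exact norm_sum_le _ _
    _ = ‖((m:ℂ)+1)⁻¹‖ * (m+1) := by
        rw [Finset.sum_congr rfl (fun k _ => h1 k)]; simp
    _ = 1 := by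
        rw [norm_inv]
        have : ‖(m:ℂ)+1‖ = (m:ℝ)+1 := by
          rw [show ((m:ℂ)+1) = ((m+1 : ℕ) : ℂ) by push_cast; ring, Complex.norm_natCast]
          push_cast; ring
        rw [this]
        field_simp

lemma abs_dirich_le (m : ℕ) (t : ℝ) (h : 0 < wrap t) :
    ‖dirich m t‖ ≤ ((m:ℝ)+1)⁻¹ * (2 * wrap t)⁻¹ := by
  unfold dirich
  set z : ℂ := Complex.exp (2 * Real.pi * Complex.I * t) with hz
  have hzk : ∀ k : ℕ, Complex.exp (2 * Real.pi * Complex.I * k * t) = z ^ k := by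
    intro k
    rw [hz, ← Complex.exp_nat_mul]
    congr 1; ring
  have habs : ‖z - 1‖ = 2 * |Real.sin (Real.pi * t)| := abs_exp_two_pi_sub_one t
  have hsin : 2 * wrap t ≤ |Real.sin (Real.pi * t)| := two_wrap_le_abs_sin t
  have hz1 : z ≠ 1 := by
    intro hzz
    rw [hzz] at habs
    simp at habs
    rw [habs] at hsin
    simp at hsin
    linarith
  rw [Finset.sum_congr rfl (fun k _ => hzk k), geom_sum_eq hz1, norm_mul, norm_div]
  have hzabs : ‖z‖ = 1 := by
    rw [hz, show (2:ℂ) * Real.pi * Complex.I * t = ((2 * Real.pi * t : ℝ):ℂ) * Complex.I by push_cast; ring]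
    exact Complex.norm_exp_ofReal_mul_I _
  have hnum : ‖z ^ (m+1) - 1‖ ≤ 2 := by
    calc ‖z ^ (m+1) - 1‖ ≤ ‖z ^ (m+1)‖ + ‖(1:ℂ)‖ := by
          exact (norm_sub_le _ _)
      _ = 2 := by rw [norm_pow, hzabs]; norm_num
  have hden : 4 * wrap t ≤ ‖z - 1‖ := by rw [habs]; linarith
  have hmabs : ‖((m:ℂ)+1)⁻¹‖ = ((m:ℝ)+1)⁻¹ := by
    rw [norm_inv, show ((m:ℂ)+1) = ((m+1 : ℕ) : ℂ) by push_cast; ring, Complex.norm_natCast]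
    push_cast; ring
  rw [hmabs]
  have h1 : ‖z ^ (m+1) - 1‖ / ‖z - 1‖ ≤ 2 / (4 * wrap t) :=
    div_le_div₀ (by norm_num) hnum (by linarith) hden
  have h2 : (2:ℝ) / (4 * wrap t) = (2 * wrap t)⁻¹ := by
    rw [eq_comm, inv_eq_iff_eq_inv, inv_div]
    field_simp
    ring
  exact mul_le_mul_of_nonneg_left (h1.trans_eq h2) (by positivity)

set_option maxHeartbeats 1000000 in
lemma dirich_expand (d P β : ℕ) (tj : Fin d → ℝ) :
    ∃ g : (Fin d → Fin (P * β + 1)) → ℂ, ∀ t : Fin d → ℝ,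
      (∏ ℓ, dirich P (t ℓ - tj ℓ)) ^ β
        = ∑ α, g α * Complex.exp (2 * π * Complex.I
            * ((∑ ℓ, ((α ℓ : ℕ) : ℝ) * t ℓ : ℝ) : ℂ)) := by
  classical
  set q : Fin d → Polynomial ℂ := fun ℓ => Polynomial.C (((P:ℂ)+1)⁻¹) *
    ∑ k ∈ Finset.range (P+1),
      Polynomial.C (Complex.exp (-(2*(π:ℂ)*Complex.I*k*tj ℓ))) * Polynomial.X ^ k with hq
  have hdeg : ∀ ℓ, ((q ℓ)^β).natDegree < P*β + 1 := by
    intro ℓ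
    apply Nat.lt_succ_of_le
    have h1 : (q ℓ).natDegree ≤ P := by
      rw [hq]
      apply le_trans (Polynomial.natDegree_mul_le)
      rw [Polynomial.natDegree_C]
      simp only [zero_add]
      apply Polynomial.natDegree_sum_le_of_forall_le
      intro k hk
      apply le_trans (Polynomial.natDegree_mul_le)
      rw [Polynomial.natDegree_C, Polynomial.natDegree_X_pow]
      simpa using Nat.lt_succ_iff.mp (Finset.mem_range.mp hk)
    calc ((q ℓ)^β).natDegree ≤ β * (q ℓ).natDegree := Polynomial.natDegree_pow_le
      _ ≤ β * P := Nat.mul_le_mul_left β h1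
      _ = P * β := Nat.mul_comm β P
  refine ⟨fun α => ∏ ℓ, ((q ℓ) ^ β).coeff (α ℓ), fun t => ?_⟩
  set z : Fin d → ℂ := fun ℓ => Complex.exp (2*(π:ℂ)*Complex.I*(t ℓ)) with hzdef
  have heval : ∀ ℓ, dirich P (t ℓ - tj ℓ) = (q ℓ).eval (z ℓ) := by
    intro ℓ
    unfold dirich
    rw [hq]
    simp only [Polynomial.eval_mul, Polynomial.eval_C, Polynomial.eval_finset_sum,
      Polynomial.eval_mul, Polynomial.eval_C, Polynomial.eval_pow, Polynomial.eval_X]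
    congr 1
    apply Finset.sum_congr rfl
    intro k _
    rw [hzdef]
    simp only
    rw [← Complex.exp_nat_mul, ← Complex.exp_add]
    congr 1
    push_cast
    ring
  calc (∏ ℓ, dirich P (t ℓ - tj ℓ)) ^ β
      = ∏ ℓ, ((q ℓ)^β).eval (z ℓ) := by
        rw [← Finset.prod_pow]
        exact Finset.prod_congr rfl fun ℓ _ => by rw [heval ℓ, Polynomial.eval_pow]
    _ = ∏ ℓ, ∑ i : Fin (P*β+1), ((q ℓ)^β).coeff i * (z ℓ)^(i:ℕ) := by
        refine Finset.prod_congr rfl fun ℓ _ => ?_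
        rw [Polynomial.eval_eq_sum_range' (hdeg ℓ), Finset.sum_range fun i => ((q ℓ)^β).coeff i * (z ℓ)^i]
    _ = ∑ α : Fin d → Fin (P*β+1), ∏ ℓ, (((q ℓ)^β).coeff (α ℓ) * (z ℓ)^((α ℓ):ℕ)) := by
        rw [Finset.prod_univ_sum]
        rw [Fintype.piFinset_univ]
    _ = ∑ α : Fin d → Fin (P*β+1), (∏ ℓ, ((q ℓ)^β).coeff (α ℓ)) * ∏ ℓ, (z ℓ)^((α ℓ):ℕ) := by
        exact Finset.sum_congr rfl fun α _ => Finset.prod_mul_distrib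
    _ = ∑ α : Fin d → Fin (P*β+1), (∏ ℓ, ((q ℓ) ^ β).coeff (α ℓ)) * Complex.exp (2 * π * Complex.I
            * ((∑ ℓ, ((α ℓ : ℕ) : ℝ) * t ℓ : ℝ) : ℂ)) := by
        refine Finset.sum_congr rfl fun α _ => ?_
        congr 1
        have h1 : ∀ ℓ, (z ℓ)^((α ℓ):ℕ) = Complex.exp (((α ℓ:ℕ):ℂ) * (2*(π:ℂ)*Complex.I*(t ℓ))) := by
          intro ℓ; rw [hzdef]; simp only; rw [Complex.exp_nat_mul]
        rw [Finset.prod_congr rfl fun ℓ _ => h1 ℓ, ← Complex.exp_sum]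
        congr 1
        push_cast
        rw [Finset.mul_sum]
        exact Finset.sum_congr rfl fun ℓ _ => by ring


theorem stmt19 (d lam β n : ℕ) (hd : 0 < d) (hlam : 0 < lam) (hβeven : Even β)
    (hβpos : 0 < β) (hn : 2 * β ^ 2 * lam ≤ n) (tj : Fin d → ℝ) :
    (∃ g : (Fin d → Fin (n / (lam * β) * β + 1)) → ℂ, ∀ t : Fin d → ℝ,
        (∏ ℓ, dirich (n / (lam * β)) (t ℓ - tj ℓ)) ^ β
          = ∑ α, g α * Complex.exp (2 * π * Complex.I
              * ((∑ ℓ, ((α ℓ : ℕ) : ℝ) * t ℓ : ℝ) : ℂ))) ∧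
    ((n / (lam * β) * β : ℕ) : ℝ) ≤ (n : ℝ) / lam ∧
    (∏ ℓ, dirich (n / (lam * β)) (tj ℓ - tj ℓ)) ^ β = 1 ∧
    (∀ t : Fin d → ℝ, (⨆ ℓ, wrap (t ℓ - tj ℓ)) ≠ 0 →
      ‖(∏ ℓ, dirich (n / (lam * β)) (t ℓ - tj ℓ)) ^ β‖
        ≤ ((lam : ℝ) * β / (2 * ((n : ℝ) + 1) * ⨆ ℓ, wrap (t ℓ - tj ℓ))) ^ β) := by
  set P := n / (lam * β) with hP
  have hlamβ : 0 < lam * β := Nat.mul_pos hlam hβpos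
  have hNle : (n:ℝ) + 1 ≤ ((lam : ℝ) * β) * ((P:ℝ) + 1) := by
    have h := Nat.lt_div_mul_add (a := n) hlamβ
    have h2 : n + 1 ≤ P * (lam*β) + lam*β := h
    calc (n:ℝ)+1 = ((n+1 : ℕ):ℝ) := by push_cast; ring
      _ ≤ ((P*(lam*β) + lam*β : ℕ):ℝ) := Nat.cast_le.mpr h2
      _ = ((lam:ℝ)*β)*((P:ℝ)+1) := by push_cast; ring
  refine ⟨dirich_expand d P β tj, ?_, ?_, ?_⟩
  · have h1 : P * β ≤ n / lam := by
      rw [hP, ← Nat.div_div_eq_div_mul]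
      exact Nat.div_mul_le_self _ _
    calc ((P*β:ℕ):ℝ) ≤ ((n/lam : ℕ):ℝ) := Nat.cast_le.mpr h1
      _ ≤ (n:ℝ)/lam := Nat.cast_div_le
  · simp [sub_self, dirich_zero]
  · intro t hW
    set W := ⨆ ℓ, wrap (t ℓ - tj ℓ) with hWdef
    have hne : Nonempty (Fin d) := ⟨⟨0, hd⟩⟩
    obtain ⟨ℓ0, hℓ0⟩ := Finite.exists_max (fun ℓ => wrap (t ℓ - tj ℓ))
    have hWeq : W = wrap (t ℓ0 - tj ℓ0) := by
      apply le_antisymm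
      · rw [hWdef]; exact ciSup_le hℓ0
      · rw [hWdef]
        exact le_ciSup (f := fun ℓ => wrap (t ℓ - tj ℓ)) (Set.Finite.bddAbove (Set.finite_range _)) ℓ0
    have hWnn : 0 ≤ W := hWeq ▸ wrap_nonneg _
    have hW0 : 0 < W := lt_of_le_of_ne hWnn (Ne.symm hW)
    have hwpos : 0 < wrap (t ℓ0 - tj ℓ0) := hWeq ▸ hW0
    have hb : ‖∏ ℓ, dirich P (t ℓ - tj ℓ)‖ ≤ ((P:ℝ)+1)⁻¹ * (2*W)⁻¹ := by
      rw [norm_prod]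
      rw [← Finset.mul_prod_erase Finset.univ _ (Finset.mem_univ ℓ0)]
      calc ‖dirich P (t ℓ0 - tj ℓ0)‖ *
            ∏ ℓ ∈ Finset.univ.erase ℓ0, ‖dirich P (t ℓ - tj ℓ)‖
          ≤ (((P:ℝ)+1)⁻¹ * (2*W)⁻¹) * 1 := by
            apply mul_le_mul
            · rw [hWeq]; exact abs_dirich_le P _ hwpos
            · exact Finset.prod_le_one (fun _ _ => norm_nonneg _)
                (fun ℓ _ => abs_dirich_le_one P _)
            · exact Finset.prod_nonneg fun _ _ => norm_nonneg _
            · positivity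
        _ = ((P:ℝ)+1)⁻¹ * (2*W)⁻¹ := mul_one _
    rw [norm_pow]
    have hbase : ((P:ℝ)+1)⁻¹ * (2*W)⁻¹ ≤ (lam:ℝ)*β / (2*((n:ℝ)+1)*W) := by
      have heq : ((P:ℝ)+1)⁻¹ * (2*W)⁻¹ = 1 / (((P:ℝ)+1)*(2*W)) := by
        rw [one_div]; exact (mul_inv _ _).symm
      rw [heq, div_le_div_iff₀ (by positivity) (by positivity)]
      nlinarith [hNle, hW0]
    calc ‖∏ ℓ, dirich P (t ℓ - tj ℓ)‖ ^ β
        ≤ (((P:ℝ)+1)⁻¹ * (2*W)⁻¹) ^ β := pow_le_pow_left₀ (norm_nonneg _) hb β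
      _ ≤ ((lam:ℝ)*β / (2*((n:ℝ)+1)*W)) ^ β := pow_le_pow_left₀ (by positivity) hbase β
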